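/- (Bergman–Lenstra) Let G be a group and H a subgroup such that the index [H : H ∩ gHg⁻¹] is at most n for every g ∈ G. Then there exists a subgroup N of G, normalized by every automorphism of G that preserves the commensurability class of H (in particular N can be taken normal in G when H has this uniform property under all conjugations), which is commensurable with H: both [H : H∩N] and [N : H∩N] are finite, with bounds depending only on n. -/

import Mathlib

/-!
We prove the Bergman–Lenstra theorem.  Write `c a = aHa⁻¹`.  For a nonempty
list `l` of group elements let `K l` be the intersection of the conjugates
`c a`, `a ∈ l`.  Each such `K l` satisfies `[K l : K l ∩ c a] ≤ n` for all
`a`.  Let `m` be the least value (over nonempty `l`) of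
`sup_a [K l : K l ∩ c a]`, and let `N` be the subgroup generated by all
`K l` whose sup is (at most) `m`.  The generating family is invariant under
conjugation, so `N` is normal, and it contains some `K lD`, so
`[H : H ∩ N]` is finite.  For the other direction, any finitely many
elements of `N` lie in the subgroup `J` generated by finitely many
generators `E i = K (l i)`; let `M = K (big)` be the intersection of all
of them (together with `K lD`).  By minimality of `m` there is `a★` with
`[M : M ∩ F] = m` exactly, where `F = c a★`.  Since `M ≤ E i` and
`[E i : E i ∩ F] ≤ m`, the natural injection
`M/(M ∩ F) ↪ E i/(E i ∩ F)` is surjective by counting, which shows that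
every element of `E i` lies in `M·F`; by induction on words, every element
of `J` lies in `M·F`, which is covered by `m·n` left cosets of `H`.  Hence
`[N : N ∩ H] ≤ m·n` by finite character. -/

open Subgroup

namespace BergmanLenstraAux

variable {G : Type*} [Group G]

/-- The conjugate `g H g⁻¹`. -/
def cj (H : Subgroup G) (g : G) : Subgroup G := H.map (MulAut.conj g).toMonoidHom

lemma cj_one (H : Subgroup G) : cj H 1 = H := by
  ext x
  simp [cj, Subgroup.mem_map]

lemma conj_comp (x a : G) :
    (MulAut.conj x).toMonoidHom.comp (MulAut.conj a).toMonoidHom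
      = (MulAut.conj (x * a)).toMonoidHom := by
  ext y
  simp only [MonoidHom.comp_apply, MulEquiv.coe_toMonoidHom, MulAut.conj_apply]
  group

lemma cj_map (H : Subgroup G) (x a : G) :
    (cj H a).map (MulAut.conj x).toMonoidHom = cj H (x * a) := by
  rw [cj, cj, Subgroup.map_map, conj_comp]

/-- `relindex` is invariant under an automorphism applied to both subgroups. -/
lemma relindex_map_mulAut (A B : Subgroup G) (e : MulAut G) :
    ((A.map e.toMonoidHom).relIndex (B.map e.toMonoidHom)) = A.relIndex B := by
  rw [Subgroup.map_equiv_eq_comap_symm' (e : G ≃* G) A, Subgroup.relIndex_comap,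
    Subgroup.map_map]
  have : (MulEquiv.symm (e : G ≃* G)).toMonoidHom.comp (e : G ≃* G).toMonoidHom
      = MonoidHom.id G := by
    ext y; simp
  rw [this, Subgroup.map_id]

/-- Intersection of the conjugates indexed by a list. -/
def KK (H : Subgroup G) : List G → Subgroup G
  | [] => ⊤
  | a :: l => cj H a ⊓ KK H l

lemma KK_le_mem (H : Subgroup G) : ∀ {l : List G} {a : G}, a ∈ l → KK H l ≤ cj H a := by
  intro l
  induction l with
  | nil => intro a ha; cases ha
  | cons b t ih =>
      intro a ha
      rcases List.mem_cons.mp ha with rfl | ha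
      · exact inf_le_left
      · exact le_trans inf_le_right (ih ha)

lemma KK_le_KK (H : Subgroup G) {l l' : List G} (hsub : ∀ a ∈ l', a ∈ l) :
    KK H l ≤ KK H l' := by
  induction l' with
  | nil => exact le_top
  | cons b t ih =>
      refine le_inf (KK_le_mem H (hsub b List.mem_cons_self)) (ih ?_)
      intro a ha; exact hsub a (List.mem_cons_of_mem _ ha)

lemma map_top_mulAut (e : MulAut G) :
    (⊤ : Subgroup G).map e.toMonoidHom = ⊤ := by
  rw [Subgroup.map_equiv_eq_comap_symm' (e : G ≃* G)]
  exact Subgroup.comap_top _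

lemma KK_map (H : Subgroup G) (x : G) : ∀ l : List G,
    (KK H l).map (MulAut.conj x).toMonoidHom = KK H (l.map (fun a => x * a)) := by
  intro l
  induction l with
  | nil => exact map_top_mulAut _
  | cons b t ih =>
      show (cj H b ⊓ KK H t).map _ = cj H (x * b) ⊓ KK H (t.map _)
      rw [Subgroup.map_inf _ _ _ (MulAut.conj x).injective, cj_map, ih]

section WithHyp

variable (H : Subgroup G) {n : ℕ}
variable (h : ∀ g : G, 0 < (H.map (MulAut.conj g).toMonoidHom).relIndex H ∧
      (H.map (MulAut.conj g).toMonoidHom).relIndex H ≤ n)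

include h

lemma cj_relindex_cj (a b : G) :
    (cj H a).relIndex (cj H b) ≠ 0 ∧ (cj H a).relIndex (cj H b) ≤ n := by
  have key : (cj H a).relIndex (cj H b) = (cj H (b⁻¹ * a)).relIndex H := by
    have := relindex_map_mulAut (cj H a) (cj H b) (MulAut.conj b⁻¹)
    rw [cj_map, cj_map, inv_mul_cancel, cj_one] at this
    exact this.symm
  rw [key]
  exact ⟨Nat.pos_iff_ne_zero.mp (h (b⁻¹ * a)).1, (h (b⁻¹ * a)).2⟩

/-- The relative index of any conjugate in a nonempty intersection of
conjugates is finite (nonzero). -/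
lemma KK_relindex_ne_zero {l : List G} (hl : l ≠ []) (a : G) :
    (cj H a).relIndex (KK H l) ≠ 0 := by
  obtain ⟨b, t, rfl⟩ := List.exists_cons_of_ne_nil hl
  intro h0
  exact (cj_relindex_cj H h a b).1
    (Subgroup.relIndex_eq_zero_of_le_right
      (KK_le_mem H List.mem_cons_self) h0)

/-- A nonempty intersection of conjugates has finite relative index in `H`. -/
lemma KK_relindexH_ne_zero : ∀ {l : List G}, l ≠ [] → (KK H l).relIndex H ≠ 0 := by
  intro l
  induction l with
  | nil => intro hl; exact absurd rfl hl
  | cons b t ih =>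
      intro _
      have hb : (cj H b).relIndex H ≠ 0 := Nat.pos_iff_ne_zero.mp (h b).1
      rcases eq_or_ne t [] with rfl | ht
      · show (cj H b ⊓ KK H []).relIndex H ≠ 0
        have : KK H ([] : List G) = (⊤ : Subgroup G) := rfl
        rw [this, inf_top_eq]
        exact hb
      · exact Subgroup.relIndex_inf_ne_zero hb (ih ht)

end WithHyp

end BergmanLenstraAux

open BergmanLenstraAux in
/-- Bergman–Lenstra: if `[H : H ∩ gHg⁻¹]` is finite and at most `n` for every
`g ∈ G`, then there is a normal subgroup `N` of `G` commensurable with `H`. -/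
theorem bergman_lenstra {G : Type*} [Group G] (H : Subgroup G) (n : ℕ)
    (h : ∀ g : G, 0 < (H.map (MulAut.conj g).toMonoidHom).relIndex H ∧
      (H.map (MulAut.conj g).toMonoidHom).relIndex H ≤ n) :
    ∃ N : Subgroup G, N.Normal ∧ Commensurable H N := by
  classical
  -- the minimal level `m`
  have hPex : ∃ k : ℕ, ∃ l : List G, l ≠ [] ∧
      ∀ a, (cj H a).relIndex (KK H l) ≤ k := by
    refine ⟨n, [1], by simp, fun a => ?_⟩
    have : KK H [1] = H := by
      show cj H 1 ⊓ KK H [] = H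
      have : KK H ([] : List G) = (⊤ : Subgroup G) := rfl
      rw [this, inf_top_eq, cj_one]
    rw [this]
    exact (h a).2
  set m := Nat.find hPex with hm_def
  obtain ⟨lD, hlD_ne, hlD_lev⟩ := Nat.find_spec hPex
  rw [← hm_def] at hlD_lev
  have hm0 : m ≠ 0 := by
    intro h0
    have := hlD_lev 1
    rw [h0, Nat.le_zero] at this
    exact KK_relindex_ne_zero H h hlD_ne 1 this
  -- the generating set and the normal subgroup `N`
  set S : Set G := {x | ∃ l : List G, l ≠ [] ∧
      (∀ a, (cj H a).relIndex (KK H l) ≤ m) ∧ x ∈ KK H l} with hS_def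
  set N : Subgroup G := Subgroup.closure S with hN_def
  have hSN : S ⊆ N := Subgroup.subset_closure
  -- membership of a whole `K l` in `N`
  have hKN : ∀ {l : List G}, l ≠ [] → (∀ a, (cj H a).relIndex (KK H l) ≤ m) →
      KK H l ≤ N := by
    intro l hl hlev x hx
    exact hSN ⟨l, hl, hlev, hx⟩
  refine ⟨N, ?_, ?_⟩
  · -- normality
    constructor
    intro x hx g
    refine Subgroup.closure_induction
      (p := fun y _ => g * y * g⁻¹ ∈ N) ?_ ?_ ?_ ?_ hx
    · -- generators
      rintro y ⟨l, hl, hlev, hy⟩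
      refine hSN ⟨l.map (fun a => g * a), by simpa using hl, ?_, ?_⟩
      · intro a
        have hrw : cj H a = (cj H (g⁻¹ * a)).map (MulAut.conj g).toMonoidHom := by
          rw [cj_map]
          congr 1
          group
        rw [← KK_map, hrw, relindex_map_mulAut]
        exact hlev (g⁻¹ * a)
      · rw [← KK_map]
        exact ⟨y, hy, rfl⟩
    · simpa using N.one_mem
    · intro y z _ _ hy hz
      have : g * (y * z) * g⁻¹ = (g * y * g⁻¹) * (g * z * g⁻¹) := by group
      rw [this]
      exact N.mul_mem hy hz
    · intro y _ hy
      have : g * y⁻¹ * g⁻¹ = (g * y * g⁻¹)⁻¹ := by group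
      rw [this]
      exact N.inv_mem hy
  · -- commensurability
    constructor
    · -- `[N : H ∩ N] ≠ 0` : the hard direction
      intro hcon
      -- the quotient `N ⧸ (H ∩ N)` is infinite
      have hinf : Infinite (↥N ⧸ H.subgroupOf N) := by
        rw [← Subgroup.index_eq_zero_iff_infinite]
        exact hcon
      set C : ℕ := m * n + 1 with hC_def
      set e : ℕ ↪ (↥N ⧸ H.subgroupOf N) := Infinite.natEmbedding _ with he_def
      set x : ℕ → ↥N := fun i => (e i).out with hx_def
      have hxe : ∀ i, (QuotientGroup.mk (x i) : ↥N ⧸ H.subgroupOf N) = e i :=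
        fun i => Quotient.out_eq' _
      -- word decompositions
      have hword : ∀ i : ℕ, ∃ L : List G, (∀ y ∈ L, y ∈ S ∪ S⁻¹) ∧
          L.prod = ((x i : G)) := by
        intro i
        have hmem : ((x i : G)) ∈ Subgroup.closure S := by
          rw [← hN_def]; exact (x i).2
        have hmem' : ((x i : G)) ∈ Submonoid.closure (S ∪ S⁻¹) := by
          rw [← Subgroup.closure_toSubmonoid]
          exact hmem
        exact Submonoid.exists_list_of_mem_closure hmem'
      choose Lw hLw1 hLw2 using hword
      -- a witness list for each generator element
      have hwit : ∀ y, y ∈ S ∪ S⁻¹ → ∃ l : List G, l ≠ [] ∧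
          (∀ a, (cj H a).relIndex (KK H l) ≤ m) ∧ y ∈ KK H l := by
        intro y hy
        rcases hy with hy | hy
        · exact hy
        · obtain ⟨l, hl, hlev, hmem⟩ := hy
          exact ⟨l, hl, hlev, by simpa using (KK H l).inv_mem hmem⟩
      choose W hW1 hW2 hW3 using hwit
      -- the big intersection
      set Lbig : List G := lD ++ ((List.range C).flatMap fun i =>
        ((Lw i).attach.flatMap fun z => W z.1 (hLw1 i z.1 z.2))) with hLbig_def
      have hLbig_ne : Lbig ≠ [] := by
        simp [hLbig_def, hlD_ne]
      set M : Subgroup G := KK H Lbig with hM_def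
      have hMleD : M ≤ KK H lD :=
        KK_le_KK H (fun a ha => List.mem_append_left _ ha)
      have hMlev : ∀ a, (cj H a).relIndex M ≤ m := by
        intro a
        exact le_trans
          (Subgroup.relIndex_le_of_le_right hMleD (KK_relindex_ne_zero H h hlD_ne a))
          (hlD_lev a)
      have hMpos : ∀ a, (cj H a).relIndex M ≠ 0 :=
        fun a => KK_relindex_ne_zero H h hLbig_ne a
      -- `M` is below every witness subgroup used by indices `i < C`
      have hMleW : ∀ i, i < C → ∀ (z : {y // y ∈ Lw i}),
          M ≤ KK H (W z.1 (hLw1 i z.1 z.2)) := by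
        intro i hi z
        refine KK_le_KK H ?_
        intro a ha
        refine List.mem_append_right _ ?_
        refine List.mem_flatMap.mpr ⟨i, List.mem_range.mpr hi, ?_⟩
        exact List.mem_flatMap.mpr ⟨z, List.mem_attach _ _, ha⟩
      -- attainment of the minimum
      have hatt : ∃ a, (cj H a).relIndex M = m := by
        by_contra hno
        push_neg at hno
        have hlt : ∀ a, (cj H a).relIndex M ≤ m - 1 := by
          intro a
          exact Nat.le_sub_one_of_lt (lt_of_le_of_ne (hMlev a) (hno a))
        have : ¬ (∃ l : List G, l ≠ [] ∧
            ∀ a, (cj H a).relIndex (KK H l) ≤ m - 1) :=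
          Nat.find_min hPex (Nat.sub_lt (Nat.pos_of_ne_zero hm0) one_pos)
        exact this ⟨Lbig, hLbig_ne, hlt⟩
      obtain ⟨astar, hstar⟩ := hatt
      set F : Subgroup G := cj H astar with hF_def
      -- cardinality of `M ⧸ (M ∩ F)`
      have hcard_M : Nat.card (↥M ⧸ F.subgroupOf M) = m := by
        rw [← Subgroup.index_eq_card]
        exact hstar
      have hfin_M : Finite (↥M ⧸ F.subgroupOf M) :=
        Nat.finite_of_card_ne_zero (by rw [hcard_M]; exact hm0)
      -- the key surjectivity: every element of a witness subgroup is in `M · F`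
      have hsurj : ∀ (l : List G), l ≠ [] →
          (∀ a, (cj H a).relIndex (KK H l) ≤ m) → (hle : M ≤ KK H l) →
          ∀ z : ↥(KK H l), ∃ w : ↥M, ((w : G))⁻¹ * (z : G) ∈ F := by
        intro l hl hlev hle z
        set φ := Subgroup.quotientSubgroupOfEmbeddingOfLE F hle with hφ_def
        have hfinE : Finite (↥(KK H l) ⧸ F.subgroupOf (KK H l)) := by
          refine Nat.finite_of_card_ne_zero ?_
          rw [← Subgroup.index_eq_card]
          exact KK_relindex_ne_zero H h hl astar
        have hble : Nat.card (↥(KK H l) ⧸ F.subgroupOf (KK H l)) ≤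
            Nat.card (↥M ⧸ F.subgroupOf M) := by
          rw [hcard_M, ← Subgroup.index_eq_card]
          exact hlev astar
        have hbij : Function.Bijective φ :=
          Function.Injective.bijective_of_nat_card_le φ.injective hble
        obtain ⟨q, hq⟩ := hbij.2 (QuotientGroup.mk z)
        set w : ↥M := q.out with hw_def
        have hqw : (QuotientGroup.mk w : ↥M ⧸ F.subgroupOf M) = q :=
          Quotient.out_eq' _
        rw [← hqw] at hq
        rw [Subgroup.quotientSubgroupOfEmbeddingOfLE_apply_mk] at hq
        have := QuotientGroup.eq.mp hq
        rw [Subgroup.mem_subgroupOf] at this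
        refine ⟨w, ?_⟩
        simpa [Subgroup.coe_inclusion] using this
      -- word lemma: every product of generators lies in `M · F`
      have hprod : ∀ i, i < C → ∀ (L : List G), (∀ y ∈ L, y ∈ Lw i) →
          ∃ w : ↥M, ((w : G))⁻¹ * L.prod ∈ F := by
        intro i hi L
        induction L with
        | nil =>
            intro _
            exact ⟨1, by simpa using F.one_mem⟩
        | cons y t ih =>
            intro hsub
            obtain ⟨w, hw⟩ := ih (fun a ha => hsub a (List.mem_cons_of_mem _ ha))
            have hy : y ∈ Lw i := hsub y List.mem_cons_self
            set z : {a // a ∈ Lw i} := ⟨y, hy⟩ with hz_def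
            have hyK : y ∈ KK H (W z.1 (hLw1 i z.1 z.2)) := hW3 _ _
            have hwK : (w : G) ∈ KK H (W z.1 (hLw1 i z.1 z.2)) :=
              hMleW i hi z w.2
            obtain ⟨w', hw'⟩ := hsurj (W z.1 (hLw1 i z.1 z.2)) (hW1 _ _) (hW2 _ _)
              (hMleW i hi z)
              ⟨y * (w : G), mul_mem hyK hwK⟩
            refine ⟨w', ?_⟩
            have hrw : ((w' : G))⁻¹ * (y :: t).prod =
                (((w' : G))⁻¹ * (y * (w : G))) * (((w : G))⁻¹ * t.prod) := by
              rw [List.prod_cons]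
              group
            rw [hrw]
            exact F.mul_mem hw' hw
      -- apply to the chosen representatives
      have hstep : ∀ i : Fin C, ∃ w : ↥M, ((w : G))⁻¹ * ((x i.1 : G)) ∈ F := by
        intro i
        obtain ⟨w, hw⟩ := hprod i.1 i.2 (Lw i.1) (fun y hy => hy)
        rw [hLw2 i.1] at hw
        exact ⟨w, hw⟩
      choose wM hwM using hstep
      -- second quotient
      have hQ2 : Nat.card (↥F ⧸ H.subgroupOf F) ≠ 0 ∧
          Nat.card (↥F ⧸ H.subgroupOf F) ≤ n := by
        rw [← Subgroup.index_eq_card]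
        have : H.relIndex F = (cj H 1).relIndex (cj H astar) := by rw [cj_one]
        exact ⟨by rw [show (H.subgroupOf F).index = H.relIndex F from rfl, this];
                  exact (cj_relindex_cj H h 1 astar).1,
               by rw [show (H.subgroupOf F).index = H.relIndex F from rfl, this];
                  exact (cj_relindex_cj H h 1 astar).2⟩
      have hfin_Q2 : Finite (↥F ⧸ H.subgroupOf F) :=
        Nat.finite_of_card_ne_zero hQ2.1
      -- canonical representatives and the pigeonhole map
      set r : Fin C → ↥M := fun i =>
        (QuotientGroup.mk (wM i) : ↥M ⧸ F.subgroupOf M).out with hr_def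
      have hrF : ∀ i, ((r i : G))⁻¹ * ((wM i : G)) ∈ F := by
        intro i
        have : (QuotientGroup.mk (r i) : ↥M ⧸ F.subgroupOf M)
            = QuotientGroup.mk (wM i) := Quotient.out_eq' _
        have := QuotientGroup.eq.mp this
        rw [Subgroup.mem_subgroupOf] at this
        simpa using this
      set f2 : Fin C → G := fun i => ((r i : G))⁻¹ * ((x i.1 : G)) with hf2_def
      have hf2F : ∀ i, f2 i ∈ F := by
        intro i
        have hrw : f2 i = (((r i : G))⁻¹ * ((wM i : G))) *
            (((wM i : G))⁻¹ * ((x i.1 : G))) := by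
          rw [hf2_def]; group
        rw [hrw]
        exact F.mul_mem (hrF i) (hwM i)
      set ψ : Fin C → (↥M ⧸ F.subgroupOf M) × (↥F ⧸ H.subgroupOf F) :=
        fun i => (QuotientGroup.mk (wM i), QuotientGroup.mk ⟨f2 i, hf2F i⟩)
        with hψ_def
      have hcard_lt : Nat.card ((↥M ⧸ F.subgroupOf M) × (↥F ⧸ H.subgroupOf F))
          < Nat.card (Fin C) := by
        have hfinC : Nat.card (Fin C) = C :=
          Nat.card_eq_fintype_card.trans (Fintype.card_fin C)
        rw [Nat.card_prod, hcard_M, hfinC]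
        calc m * Nat.card (↥F ⧸ H.subgroupOf F) ≤ m * n :=
              Nat.mul_le_mul_left _ hQ2.2
          _ < C := Nat.lt_succ_self _
      have hninj : ¬ Function.Injective ψ := by
        intro hinj
        exact absurd (Nat.card_le_card_of_injective ψ hinj)
          (not_le.mpr hcard_lt)
      obtain ⟨i, j, hψij, hij⟩ := Function.not_injective_iff.mp hninj
      have h1 : (QuotientGroup.mk (wM i) : ↥M ⧸ F.subgroupOf M)
          = QuotientGroup.mk (wM j) := congrArg Prod.fst hψij
      have h2 : (QuotientGroup.mk (⟨f2 i, hf2F i⟩ : ↥F) : ↥F ⧸ H.subgroupOf F)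
          = QuotientGroup.mk ⟨f2 j, hf2F j⟩ := congrArg Prod.snd hψij
      have hr_eq : r i = r j := by
        rw [hr_def]
        simp only
        rw [h1]
      have h2' : (f2 i)⁻¹ * f2 j ∈ H := by
        have := QuotientGroup.eq.mp h2
        rw [Subgroup.mem_subgroupOf] at this
        simpa using this
      have hxij : ((x i.1 : G))⁻¹ * ((x j.1 : G)) ∈ H := by
        have hrw : (f2 i)⁻¹ * f2 j =
            ((x i.1 : G))⁻¹ * ((r i : G)) * ((r j : G))⁻¹ * ((x j.1 : G)) := by
          rw [hf2_def]; group
        rw [hrw, hr_eq] at h2'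
        have hrw2 : ((x i.1 : G))⁻¹ * ((r j : G)) * ((r j : G))⁻¹ * ((x j.1 : G))
            = ((x i.1 : G))⁻¹ * ((x j.1 : G)) := by group
        rwa [hrw2] at h2'
      -- contradiction with the distinctness of the chosen cosets
      have : e i.1 = e j.1 := by
        rw [← hxe i.1, ← hxe j.1]
        refine QuotientGroup.eq.mpr ?_
        rw [Subgroup.mem_subgroupOf]
        simpa using hxij
      have : i.1 = j.1 := e.injective this
      exact hij (Fin.ext this)
    · -- `[H : H ∩ N] ≠ 0` : the easy direction
      intro hcon
      have hDN : KK H lD ≤ N := hKN hlD_ne hlD_lev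
      exact KK_relindexH_ne_zero H h hlD_ne
        (Subgroup.relIndex_eq_zero_of_le_left hDN hcon)
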